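/- Let f have M-Lipschitz continuous Hessian, with ∇²f(x_k) ⪯ U_H·I, g_k = ∇f(x_k) ≠ 0, and δ ≥ 0. Suppose [v; t] is a unit eigenvector of F = [[∇²f(x_k), g_k], [g_kᵀ, -δ]] for its smallest eigenvalue -θ with θ > δ and t ≠ 0, and d = v/t satisfies ‖d‖ ≤ Δ ≤ √2/2. Then with x_{k+1} = x_k + d, we have ‖∇f(x_{k+1})‖ ≤ 2(U_H + δ)Δ³ + (M/2)Δ² + δΔ. -/

import Mathlib

set_option synthInstance.maxHeartbeats 1000000
set_option maxHeartbeats 1000000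

open intervalIntegral in
lemma taylor_bound_aux {n : ℕ}
    (gf : EuclideanSpace ℝ (Fin n) → EuclideanSpace ℝ (Fin n))
    (Hf : EuclideanSpace ℝ (Fin n) → EuclideanSpace ℝ (Fin n) →L[ℝ] EuclideanSpace ℝ (Fin n))
    (M : ℝ) (hM : 0 ≤ M)
    (hhess : ∀ x, HasFDerivAt gf (Hf x) x)
    (hlip : ∀ x y, ‖Hf x - Hf y‖ ≤ M * ‖x - y‖)
    (x d : EuclideanSpace ℝ (Fin n)) :
    ‖gf (x + d) - gf x - Hf x d‖ ≤ M / 2 * ‖d‖ ^ 2 := by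
  have hcont : Continuous Hf :=
    (LipschitzWith.of_dist_le_mul (K := ⟨M, hM⟩)
      (fun a b => by rw [dist_eq_norm, dist_eq_norm]; exact hlip a b)).continuous
  have hline : ∀ s : ℝ, HasDerivAt (fun s : ℝ => x + s • d) d s := fun s => by
    simpa using ((hasDerivAt_id s).smul_const d).const_add x
  have hφ : ∀ s : ℝ, HasDerivAt (fun s : ℝ => gf (x + s • d)) (Hf (x + s • d) d) s :=
    fun s => (hhess _).comp_hasDerivAt s (hline s)
  have hint : Continuous fun s : ℝ => Hf (x + s • d) d :=
    (hcont.comp (by continuity)).clm_apply continuous_const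
  have key : gf (x + d) - gf x = ∫ s in (0:ℝ)..1, Hf (x + s • d) d := by
    have := integral_eq_sub_of_hasDerivAt (f := fun s : ℝ => gf (x + s • d))
      (fun s _ => hφ s) (hint.intervalIntegrable 0 1)
    simpa using this.symm
  have hsplit : gf (x + d) - gf x - Hf x d
      = ∫ s in (0:ℝ)..1, (Hf (x + s • d) d - Hf x d) := by
    rw [integral_sub (hint.intervalIntegrable 0 1) intervalIntegrable_const, ← key]
    simp
  rw [hsplit]
  have hb : ‖∫ s in (0:ℝ)..1, (Hf (x + s • d) d - Hf x d)‖
      ≤ |∫ s in (0:ℝ)..1, M * ‖d‖ ^ 2 * s| := by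
    apply intervalIntegral.norm_integral_le_abs_of_norm_le
    · rw [MeasureTheory.ae_restrict_iff' measurableSet_uIoc]
      filter_upwards with s hs
      rw [Set.uIoc_of_le (by norm_num)] at hs
      have hs0 : 0 < s := hs.1
      have h1 : Hf (x + s • d) d - Hf x d = (Hf (x + s • d) - Hf x) d := by simp
      rw [h1]
      calc ‖(Hf (x + s • d) - Hf x) d‖ ≤ ‖Hf (x + s • d) - Hf x‖ * ‖d‖ :=
            (Hf (x + s • d) - Hf x).le_opNorm d
        _ ≤ (M * ‖x + s • d - x‖) * ‖d‖ := by
            gcongr; exact hlip _ _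
        _ = M * ‖d‖ ^ 2 * s := by
            rw [add_sub_cancel_left, norm_smul, Real.norm_eq_abs, abs_of_pos hs0]; ring
    · exact (by continuity : Continuous fun s : ℝ => M * ‖d‖ ^ 2 * s).intervalIntegrable 0 1
  refine hb.trans (le_of_eq ?_)
  rw [intervalIntegral.integral_const_mul, integral_id]
  rw [abs_of_nonneg (by positivity)]
  ring

/-- Small-step case: the gradient at the next iterate `x_{k+1} = x_k + d` is small. -/
theorem next_iterate_gradient_bound {n : ℕ}
    (f : EuclideanSpace ℝ (Fin n) → ℝ)
    (gf : EuclideanSpace ℝ (Fin n) → EuclideanSpace ℝ (Fin n))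
    (Hf : EuclideanSpace ℝ (Fin n) → EuclideanSpace ℝ (Fin n) →L[ℝ] EuclideanSpace ℝ (Fin n))
    (M U_H δ θ Δ : ℝ)
    (hgrad : ∀ x, HasGradientAt f (gf x) x)
    (hhess : ∀ x, HasFDerivAt gf (Hf x) x)
    (hlip : ∀ x y, ‖Hf x - Hf y‖ ≤ M * ‖x - y‖)
    (xk : EuclideanSpace ℝ (Fin n))
    (hUH : ∀ w, (inner ℝ (Hf xk w) w : ℝ) ≤ U_H * ‖w‖ ^ 2)
    (hgk : gf xk ≠ 0) (hδ : 0 ≤ δ) (hθ : δ < θ)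
    (v : EuclideanSpace ℝ (Fin n)) (t : ℝ) (ht : t ≠ 0)
    (hunit : ‖v‖ ^ 2 + t ^ 2 = 1)
    -- eigenvector equation for the homogenized matrix, eigenvalue `-θ`
    (heig1 : Hf xk v + t • gf xk = (-θ) • v)
    (heig2 : (inner ℝ (gf xk) v : ℝ) - δ * t = -θ * t)
    -- `-θ` is the smallest eigenvalue: Rayleigh quotient lower bound
    (hmin : ∀ (w : EuclideanSpace ℝ (Fin n)) (s : ℝ),
      (-θ) * (‖w‖ ^ 2 + s ^ 2) ≤
        (inner ℝ (Hf xk w) w : ℝ) + 2 * s * (inner ℝ (gf xk) w : ℝ) - δ * s ^ 2)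
    (hd : ‖t⁻¹ • v‖ ≤ Δ) (hΔ : Δ ≤ Real.sqrt 2 / 2) :
    ‖gf (xk + t⁻¹ • v)‖ ≤ 2 * (U_H + δ) * Δ ^ 3 + M / 2 * Δ ^ 2 + δ * Δ := by
  set d : EuclideanSpace ℝ (Fin n) := t⁻¹ • v with hd_def
  set g : EuclideanSpace ℝ (Fin n) := gf xk with hg_def
  set H : EuclideanSpace ℝ (Fin n) →L[ℝ] EuclideanSpace ℝ (Fin n) := Hf xk with hH_def
  have hgnorm : 0 < ‖g‖ := norm_pos_iff.mpr hgk
  -- M ≥ 0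
  have hM : 0 ≤ M := by
    have h := hlip xk (xk + g)
    have h2 : (0:ℝ) ≤ M * ‖xk - (xk + g)‖ := le_trans (norm_nonneg _) h
    have h3 : ‖xk - (xk + g)‖ = ‖g‖ := by
      rw [show xk - (xk + g) = -g by abel, norm_neg]
    rw [h3] at h2
    nlinarith
  -- eigen equation divided by t
  have hA : H d + g = (-θ) • d := by
    have h1 : H d = t⁻¹ • (H v) := by rw [hd_def, map_smul]
    have h2 : H v = (-θ) • v - t • g := by rw [← heig1]; abel
    rw [h1, h2, smul_sub, smul_smul, smul_smul, inv_mul_cancel₀ ht, one_smul,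
      mul_comm, ← smul_smul]
    abel
  -- inner ℝ product of g with d
  have hgd : (inner ℝ g d : ℝ) = δ - θ := by
    rw [hd_def, real_inner_smul_right]
    have h5 : (inner ℝ g v : ℝ) = (δ - θ) * t := by linarith [heig2]
    rw [h5]; field_simp
  -- Taylor bound
  have htaylor : ‖gf (xk + d) - g - H d‖ ≤ M / 2 * ‖d‖ ^ 2 := by
    have := taylor_bound_aux gf Hf M hM hhess hlip xk d
    rwa [← hg_def, ← hH_def] at this
  clear_value d
  clear hd_def heig1 heig2 hunit
  -- θ - δ ≤ Δ * ‖g‖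
  have hΔ0 : 0 ≤ Δ := le_trans (norm_nonneg _) hd
  have hθΔ : θ - δ ≤ Δ * ‖g‖ := by
    have h1 : |(inner ℝ g d : ℝ)| ≤ ‖g‖ * ‖d‖ := abs_real_inner_le_norm g d
    have h2 : θ - δ ≤ |(inner ℝ g d : ℝ)| := by rw [hgd, abs_sub_comm]; exact le_abs_self _
    have h3 : ‖g‖ * ‖d‖ ≤ ‖g‖ * Δ := by gcongr
    nlinarith
  -- PSD of H + θ I
  have hpsd : ∀ w : EuclideanSpace ℝ (Fin n), 0 ≤ (inner ℝ (H w) w : ℝ) + θ * ‖w‖ ^ 2 := by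
    intro w
    nlinarith [hmin w 0]
  -- symmetry of H
  have hsymm : ∀ u w : EuclideanSpace ℝ (Fin n), (inner ℝ (H u) w : ℝ) = inner ℝ (H w) u := by
    intro u w
    have hf' : ∀ y, HasFDerivAt f ((innerSL ℝ) (gf y)) y := by
      intro y
      have h := (hgrad y).hasFDerivAt
      have he : (InnerProductSpace.toDual ℝ (EuclideanSpace ℝ (Fin n))) (gf y)
          = (innerSL ℝ) (gf y) := by ext w; simp
      rwa [he] at h
    have h2 : HasFDerivAt (fun y => (innerSL ℝ) (gf y))
        ((innerSL ℝ).comp (Hf xk)) xk :=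
      (innerSL ℝ).hasFDerivAt.comp xk (hhess xk)
    have h3 := second_derivative_symmetric hf' h2 u w
    rw [hH_def]
    simpa using h3
  -- the bilinear form values
  have hBdd : (inner ℝ (H d) d : ℝ) + θ * inner ℝ d d = θ - δ := by
    have h1 : (inner ℝ (H d) d : ℝ) = inner ℝ ((-θ) • d - g) d := by
      rw [show ((-θ) • d - g : EuclideanSpace ℝ (Fin n)) = H d by rw [← hA]; abel]
    rw [h1, inner_sub_left, real_inner_smul_left, hgd]
    ring
  have hBdg : (inner ℝ (H d) g : ℝ) + θ * inner ℝ d g = -‖g‖ ^ 2 := by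
    have h1 : (inner ℝ (H d) g : ℝ) = inner ℝ ((-θ) • d - g) g := by
      rw [show ((-θ) • d - g : EuclideanSpace ℝ (Fin n)) = H d by rw [← hA]; abel]
    rw [h1, inner_sub_left, real_inner_smul_left, real_inner_self_eq_norm_sq]
    ring
  have hBgg_le : (inner ℝ (H g) g : ℝ) + θ * inner ℝ g g ≤ (U_H + θ) * ‖g‖ ^ 2 := by
    have h6 := hUH g
    rw [real_inner_self_eq_norm_sq]
    nlinarith
  have hBgg_nn : 0 ≤ (inner ℝ (H g) g : ℝ) + θ * inner ℝ g g := by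
    have h7 := hpsd g
    rw [real_inner_self_eq_norm_sq]
    nlinarith
  -- Cauchy-Schwarz for the PSD form
  have hCS : ((inner ℝ (H d) g : ℝ) + θ * inner ℝ d g) ^ 2
      ≤ ((inner ℝ (H g) g : ℝ) + θ * inner ℝ g g) * ((inner ℝ (H d) d : ℝ) + θ * inner ℝ d d) := by
    have hq : ∀ l : ℝ, 0 ≤ ((inner ℝ (H g) g : ℝ) + θ * inner ℝ g g) * (l * l)
        + (2 * ((inner ℝ (H d) g : ℝ) + θ * inner ℝ d g)) * l
        + ((inner ℝ (H d) d : ℝ) + θ * inner ℝ d d) := by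
      intro l
      have h := hpsd (d + l • g)
      have hexp : (inner ℝ (H (d + l • g)) (d + l • g) : ℝ)
          = inner ℝ (H d) d + 2 * l * inner ℝ (H d) g + l ^ 2 * inner ℝ (H g) g := by
        simp only [map_add, map_smul, inner_add_left, inner_add_right,
          real_inner_smul_left, real_inner_smul_right]
        rw [hsymm g d]; ring
      have hnorm : ‖d + l • g‖ ^ 2 = ‖d‖ ^ 2 + 2 * l * inner ℝ d g + l ^ 2 * ‖g‖ ^ 2 := by
        simp only [← real_inner_self_eq_norm_sq, inner_add_add_self,
          real_inner_smul_left, real_inner_smul_right]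
        rw [real_inner_comm g d]; ring
      rw [hexp, hnorm] at h
      have hgg : (inner ℝ g g : ℝ) = ‖g‖ ^ 2 := real_inner_self_eq_norm_sq g
      have hdd : (inner ℝ d d : ℝ) = ‖d‖ ^ 2 := real_inner_self_eq_norm_sq d
      rw [hgg, hdd]
      nlinarith
    have h8 := discrim_le_zero hq
    rw [discrim] at h8
    nlinarith
  -- gradient norm bound
  have hgsq : ‖g‖ ^ 2 ≤ (U_H + θ) * (θ - δ) := by
    have h4 : (‖g‖ ^ 2) ^ 2 ≤ ((U_H + θ) * ‖g‖ ^ 2) * (θ - δ) := by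
      calc (‖g‖ ^ 2) ^ 2 = ((inner ℝ (H d) g : ℝ) + θ * inner ℝ d g) ^ 2 := by rw [hBdg]; ring
        _ ≤ ((inner ℝ (H g) g : ℝ) + θ * inner ℝ g g) * ((inner ℝ (H d) d : ℝ) + θ * inner ℝ d d) := hCS
        _ ≤ ((U_H + θ) * ‖g‖ ^ 2) * (θ - δ) := by
            rw [hBdd]
            apply mul_le_mul_of_nonneg_right hBgg_le (by linarith)
    have hg2 : (0:ℝ) < ‖g‖ ^ 2 := by positivity
    nlinarith
  have hUHθ : 0 ≤ U_H + θ := by nlinarith [hBgg_nn, hBgg_le, real_inner_self_eq_norm_sq g]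
  have hgΔ : ‖g‖ ≤ (U_H + θ) * Δ := by
    have h1 : ‖g‖ ^ 2 ≤ (U_H + θ) * (Δ * ‖g‖) := by
      calc ‖g‖ ^ 2 ≤ (U_H + θ) * (θ - δ) := hgsq
        _ ≤ (U_H + θ) * (Δ * ‖g‖) := by gcongr
    nlinarith
  have hΔsq : Δ ^ 2 ≤ 1 / 2 := by
    have h2 : (Real.sqrt 2 / 2) ^ 2 = 1 / 2 := by
      rw [div_pow, Real.sq_sqrt (by norm_num : (0:ℝ) ≤ 2)]; norm_num
    nlinarith [Real.sqrt_nonneg 2]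
  have hgb : ‖g‖ ≤ 2 * (U_H + δ) * Δ := by
    have h9 : ‖g‖ ≤ (U_H + δ) * Δ + Δ ^ 2 * ‖g‖ := by nlinarith
    nlinarith
  -- assemble
  have hend : ‖gf (xk + d)‖ ≤ M / 2 * ‖d‖ ^ 2 + θ * ‖d‖ := by
    have h1 : gf (xk + d) = (gf (xk + d) - g - H d) + ((-θ) • d) := by
      rw [← hA]; abel
    rw [h1]
    refine (norm_add_le _ _).trans ?_
    have h2 : ‖(-θ) • d‖ = θ * ‖d‖ := by
      rw [norm_smul, Real.norm_eq_abs, abs_of_nonpos (by linarith : -θ ≤ 0)]; ring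
    rw [h2]
    gcongr
  refine hend.trans ?_
  have hθ0 : 0 ≤ θ := by linarith
  have hM2 : M / 2 * ‖d‖ ^ 2 ≤ M / 2 * Δ ^ 2 := by
    have : ‖d‖ ^ 2 ≤ Δ ^ 2 := by nlinarith [norm_nonneg d]
    nlinarith
  have hθd : θ * ‖d‖ ≤ 2 * (U_H + δ) * Δ ^ 3 + δ * Δ := by
    have h1 : θ * ‖d‖ ≤ θ * Δ := by gcongr
    have h2 : θ * Δ ≤ (δ + Δ * ‖g‖) * Δ := by nlinarith
    have h3 : Δ * ‖g‖ ≤ Δ * (2 * (U_H + δ) * Δ) := by gcongr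
    nlinarith
  linarith
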